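/- Let f : ℝ → ℝ be twice differentiable with f'' concave on an interval I. Then for all y ∈ I and δ ≥ 0 with y+δ, y−δ ∈ I, f(y+δ) + f(y−δ) ≤ 2f(y) + f''(y)·δ². -/

import Mathlib

theorem second_deriv_concave_bound (I : Set ℝ) (f f' f'' : ℝ → ℝ)
    (hderiv : ∀ x ∈ I, HasDerivAt f (f' x) x)
    (hderiv2 : ∀ x ∈ I, HasDerivAt f' (f'' x) x)
    (hconc : ConcaveOn ℝ I f'')
    (y δ : ℝ) (hy : y ∈ I) (hδ : 0 ≤ δ) (hyp : y + δ ∈ I) (hym : y - δ ∈ I) :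
    f (y + δ) + f (y - δ) ≤ 2 * f y + f'' y * δ ^ 2 := by
  rcases eq_or_lt_of_le hδ with h0 | h0
  · rw [← h0]; ring_nf; simp
  -- membership of y ± t for t ∈ [0, δ]
  have hδne : δ ≠ 0 := ne_of_gt h0
  have mem : ∀ t ∈ Set.Icc (0:ℝ) δ, y + t ∈ I ∧ y - t ∈ I := by
    intro t ht
    set a := t / δ with ha
    have ha0 : 0 ≤ a := div_nonneg ht.1 hδ
    have ha1 : a ≤ 1 := (div_le_one h0).2 ht.2
    have haδ : a * δ = t := div_mul_cancel₀ t hδne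
    constructor
    · have h1 := hconc.1 hy hyp (sub_nonneg.2 ha1) ha0 (by ring)
      have heq : (1 - a) • y + a • (y + δ) = y + t := by
        simp only [smul_eq_mul]; linear_combination haδ
      rwa [heq] at h1
    · have h1 := hconc.1 hy hym (sub_nonneg.2 ha1) ha0 (by ring)
      have heq : (1 - a) • y + a • (y - δ) = y - t := by
        simp only [smul_eq_mul]; linear_combination -haδ
      rwa [heq] at h1
  -- concavity midpoint inequality
  have key : ∀ t ∈ Set.Icc (0:ℝ) δ, f'' (y + t) + f'' (y - t) ≤ 2 * f'' y := by
    intro t ht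
    have h2 := hconc.2 (mem t ht).1 (mem t ht).2 (by norm_num : (0:ℝ) ≤ 1/2)
      (by norm_num : (0:ℝ) ≤ 1/2) (by norm_num)
    have heq : (1/2 : ℝ) • (y + t) + (1/2 : ℝ) • (y - t) = y := by
      simp only [smul_eq_mul]; ring
    rw [heq] at h2
    simp only [smul_eq_mul] at h2
    linarith
  set g : ℝ → ℝ := fun t => f' (y + t) - f' (y - t) - 2 * f'' y * t with hgdef
  have hg : ∀ t ∈ Set.Icc (0:ℝ) δ,
      HasDerivAt g (f'' (y + t) + f'' (y - t) - 2 * f'' y) t := by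
    intro t ht
    have h1 : HasDerivAt (fun t => f' (y + t)) (f'' (y + t) * 1) t :=
      (hderiv2 _ (mem t ht).1).comp t ((hasDerivAt_id t).const_add y)
    have h2 : HasDerivAt (fun t => f' (y - t)) (f'' (y - t) * (-1)) t :=
      (hderiv2 _ (mem t ht).2).comp t ((hasDerivAt_id t).const_sub y)
    have h3 : HasDerivAt (fun t : ℝ => 2 * f'' y * t) (2 * f'' y) t := by
      simpa using (hasDerivAt_id t).const_mul (2 * f'' y)
    have := (h1.sub h2).sub h3
    exact this.congr_deriv (by ring)
  have gant : AntitoneOn g (Set.Icc 0 δ) := by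
    apply antitoneOn_of_deriv_nonpos (convex_Icc 0 δ)
    · exact fun t ht => (hg t ht).continuousAt.continuousWithinAt
    · intro t ht
      rw [interior_Icc] at ht
      exact ((hg t (Set.Ioo_subset_Icc_self ht)).differentiableAt.differentiableWithinAt)
    · intro t ht
      rw [interior_Icc] at ht
      have ht' : t ∈ Set.Icc (0:ℝ) δ := Set.Ioo_subset_Icc_self ht
      rw [(hg t ht').deriv]
      linarith [key t ht']
  have g0 : g 0 = 0 := by simp [hgdef]
  have gle : ∀ t ∈ Set.Icc (0:ℝ) δ, g t ≤ 0 := by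
    intro t ht
    have := gant (Set.left_mem_Icc.2 hδ) ht ht.1
    linarith [g0 ▸ this]
  set h : ℝ → ℝ := fun t => f (y + t) + f (y - t) - f'' y * t ^ 2 with hhdef
  have hh : ∀ t ∈ Set.Icc (0:ℝ) δ, HasDerivAt h (g t) t := by
    intro t ht
    have h1 : HasDerivAt (fun t => f (y + t)) (f' (y + t) * 1) t :=
      (hderiv _ (mem t ht).1).comp t ((hasDerivAt_id t).const_add y)
    have h2 : HasDerivAt (fun t => f (y - t)) (f' (y - t) * (-1)) t :=
      (hderiv _ (mem t ht).2).comp t ((hasDerivAt_id t).const_sub y)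
    have h3 : HasDerivAt (fun t : ℝ => f'' y * t ^ 2) (f'' y * (2 * t)) t := by
      simpa using ((hasDerivAt_pow 2 t).const_mul (f'' y))
    have := (h1.add h2).sub h3
    exact this.congr_deriv (by simp [hgdef]; ring)
  have hant : AntitoneOn h (Set.Icc 0 δ) := by
    apply antitoneOn_of_deriv_nonpos (convex_Icc 0 δ)
    · exact fun t ht => (hh t ht).continuousAt.continuousWithinAt
    · intro t ht
      rw [interior_Icc] at ht
      exact ((hh t (Set.Ioo_subset_Icc_self ht)).differentiableAt.differentiableWithinAt)
    · intro t ht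
      rw [interior_Icc] at ht
      have ht' : t ∈ Set.Icc (0:ℝ) δ := Set.Ioo_subset_Icc_self ht
      rw [(hh t ht').deriv]
      exact gle t ht'
  have := hant (Set.left_mem_Icc.2 hδ) (Set.right_mem_Icc.2 hδ) hδ
  simp only [hhdef] at this
  norm_num at this
  linarith
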